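/- Uniqueness of the dual quadrilateral up to scaling and translation (Lemma 'dual quad', uniqueness part): Let V be a real vector space, M ∈ V, let e₁, e₂ ∈ V be linearly independent, let α, β, γ, δ be nonzero real numbers with α ≠ γ and β ≠ δ, and set A = M + αe₁, B = M + βe₂, C = M + γe₁, D = M + δe₂. If (A*,B*,C*,D*) and (A′,B′,C′,D′) are both quadrilaterals dual to (A,B,C,D), then there exist a nonzero real number λ and a vector t ∈ V such that A′ = λA* + t, B′ = λB* + t, C′ = λC* + t, D′ = λD* + t. -/

import Mathlib

/-- Two planar quadrilaterals (A,B,C,D) and (A',B',C',D') are dual: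
corresponding sides are parallel and non-corresponding diagonals are parallel. -/
def IsDualQuad {V : Type*} [AddCommGroup V] [Module ℝ V]
    (A B C D A' B' C' D' : V) : Prop :=
  (∃ c : ℝ, c ≠ 0 ∧ B' - A' = c • (B - A)) ∧
  (∃ c : ℝ, c ≠ 0 ∧ C' - B' = c • (C - B)) ∧
  (∃ c : ℝ, c ≠ 0 ∧ D' - C' = c • (D - C)) ∧
  (∃ c : ℝ, c ≠ 0 ∧ A' - D' = c • (A - D)) ∧
  (∃ c : ℝ, c ≠ 0 ∧ C' - A' = c • (D - B)) ∧
  (∃ c : ℝ, c ≠ 0 ∧ D' - B' = c • (C - A))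

/-- Key structural lemma: for any quadrilateral dual to (A,B,C,D), the key
coefficients satisfy explicit scalar relations. -/
lemma quad_rel {V : Type*} [AddCommGroup V] [Module ℝ V]
    {e₁ e₂ : V} (hpair : ∀ s t : ℝ, s • e₁ + t • e₂ = 0 → s = 0 ∧ t = 0)
    {α β γ δ : ℝ} (hα : α ≠ 0)
    {M A B C D : V}
    (hA : A = M + α • e₁) (hB : B = M + β • e₂)
    (hC : C = M + γ • e₁) (hD : D = M + δ • e₂)
    {P Q R S : V} (h : IsDualQuad A B C D P Q R S) :
    ∃ c1 c4 c5 : ℝ, c1 ≠ 0 ∧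
      Q - P = c1 • (B - A) ∧ R - P = c5 • (D - B) ∧ P - S = c4 • (A - D) ∧
      c5 * (δ - β) * γ = c1 * β * (γ - α) ∧ c4 * δ = c1 * β := by
  obtain ⟨⟨c1, hc1, hQP⟩, ⟨c2, hc2, hRQ⟩, ⟨c3, hc3, hSR⟩, ⟨c4, hc4, hPS⟩,
    ⟨c5, hc5, hRP⟩, ⟨c6, hc6, hSQ⟩⟩ := h
  subst hA hB hC hD
  have E1 : (c2 * γ - c1 * α) • e₁ + ((c1 - c2) * β - c5 * (δ - β)) • e₂ = 0 := by
    linear_combination (norm := module) hRP - hRQ - hQP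
  have E2 : ((c2 - c3) * γ - c6 * (γ - α)) • e₁ + (c3 * δ - c2 * β) • e₂ = 0 := by
    linear_combination (norm := module) hSQ - hRQ - hSR
  have E3 : (-(c1 * α) + c2 * γ - c3 * γ + c4 * α) • e₁ +
      (c1 * β - c2 * β + c3 * δ - c4 * δ) • e₂ = 0 := by
    linear_combination (norm := module) -hQP - hRQ - hSR - hPS
  obtain ⟨h1e, h1f⟩ := hpair _ _ E1
  obtain ⟨h2e, h2f⟩ := hpair _ _ E2
  obtain ⟨h3e, h3f⟩ := hpair _ _ E3
  refine ⟨c1, c4, c5, hc1, hQP, hRP, hPS, ?_, ?_⟩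
  · linear_combination -γ * h1f - β * h1e
  · have key : α * (c4 * δ) = α * (c1 * β) := by
      linear_combination δ * h3e + γ * h2f + (β - δ) * h1e
    exact mul_left_cancel₀ hα key

/-- Uniqueness of the dual quadrilateral up to scaling and translation. -/
theorem dual_quadrilateral_uniqueness
    {V : Type*} [AddCommGroup V] [Module ℝ V]
    (M e₁ e₂ : V) (hlin : LinearIndependent ℝ ![e₁, e₂])
    (α β γ δ : ℝ) (hα : α ≠ 0) (hβ : β ≠ 0) (hγ : γ ≠ 0) (hδ : δ ≠ 0)
    (hαγ : α ≠ γ) (hβδ : β ≠ δ)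
    (A B C D : V)
    (hA : A = M + α • e₁) (hB : B = M + β • e₂)
    (hC : C = M + γ • e₁) (hD : D = M + δ • e₂)
    (Astar Bstar Cstar Dstar A' B' C' D' : V)
    (h1 : IsDualQuad A B C D Astar Bstar Cstar Dstar)
    (h2 : IsDualQuad A B C D A' B' C' D') :
    ∃ (lam : ℝ) (t : V), lam ≠ 0 ∧
      A' = lam • Astar + t ∧ B' = lam • Bstar + t ∧
      C' = lam • Cstar + t ∧ D' = lam • Dstar + t := by
  have hpair : ∀ s t : ℝ, s • e₁ + t • e₂ = 0 → s = 0 ∧ t = 0 :=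
    LinearIndependent.pair_iff.mp hlin
  obtain ⟨c1, c4, c5, hc1, hQP, hRP, hPS, hc5r, hc4r⟩ :=
    quad_rel hpair hα hA hB hC hD h1
  obtain ⟨d1, d4, d5, hd1, hQP', hRP', hPS', hd5r, hd4r⟩ :=
    quad_rel hpair hα hA hB hC hD h2
  have hδβ : δ - β ≠ 0 := sub_ne_zero.mpr (Ne.symm hβδ)
  have hδβγ : (δ - β) * γ ≠ 0 := mul_ne_zero hδβ hγ
  set lam : ℝ := d1 / c1 with hlam
  have hlamne : lam ≠ 0 := div_ne_zero hd1 hc1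
  have hlamc1 : lam * c1 = d1 := div_mul_cancel₀ d1 hc1
  have hd5c1 : d5 * c1 = d1 * c5 := by
    have := mul_left_cancel₀ hδβγ (show ((δ-β)*γ) * (d5 * c1) = ((δ-β)*γ) * (d1 * c5) by
      linear_combination c1 * hd5r - d1 * hc5r)
    exact this
  have hd4c1 : d4 * c1 = d1 * c4 := by
    exact mul_left_cancel₀ hδ (show δ * (d4 * c1) = δ * (d1 * c4) by
      linear_combination c1 * hd4r - d1 * hc4r)
  have hlamc5 : lam * c5 = d5 := by
    rw [hlam, div_mul_eq_mul_div, div_eq_iff hc1]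
    linear_combination -hd5c1
  have hlamc4 : lam * c4 = d4 := by
    rw [hlam, div_mul_eq_mul_div, div_eq_iff hc1]
    linear_combination -hd4c1
  refine ⟨lam, A' - lam • Astar, hlamne, by module, ?_, ?_, ?_⟩
  · have hv : B' - A' = lam • (Bstar - Astar) := by
      rw [hQP, hQP', smul_smul, hlamc1]
    linear_combination (norm := module) hv
  · have hv : C' - A' = lam • (Cstar - Astar) := by
      rw [hRP, hRP', smul_smul, hlamc5]
    linear_combination (norm := module) hv
  · have hv : A' - D' = lam • (Astar - Dstar) := by
      rw [hPS, hPS', smul_smul, hlamc4]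
    linear_combination (norm := module) -hv
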